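/- If A → B is a flat ring homomorphism and (a_1,...,a_n) is a weakly proregular sequence in A, then the image sequence (g(a_1),...,g(a_n)) in B is weakly proregular. -/

import Mathlib

/-!
We use an explicit model for the Koszul complex `K(A; aa)` of a finite sequence
`aa = (a_1, ..., a_n)` in a commutative ring `A`: the degree `-q` component is the
free module of functions on the `q`-element subsets of `Fin n` (corresponding to the
basis of `Λ^q(A^n)`), and the differential is contraction against `aa` with the usual
signs.  The transition map `μ_{j,i} : K(A; aa^j) → K(A; aa^i)` multiplies the
component indexed by a subset `s` by `∏_{k ∈ s} a_k^(j-i)`.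

A sequence is weakly proregular if for every `q < 0` the inverse system
`{H^q(K(A; aa^i))}` is pro-zero: for every `i` there is `j ≥ i` such that the
transition map `H^q(K(A; aa^j)) → H^q(K(A; aa^i))` is zero, i.e. every degree `-q`
cocycle at level `j` is sent by `μ_{j,i}` to a coboundary at level `i`.
-/

/-- The degree `-q` component of the Koszul complex on `n` elements. -/
abbrev KoszulDeg (A : Type*) (n q : ℕ) : Type _ :=
  {s : Finset (Fin n) // s.card = q} → A

/-- The Koszul differential `K(A; aa)^{-(q+1)} → K(A; aa)^{-q}`, given by contraction
against the sequence `aa`, with the usual signs. -/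
noncomputable def koszulD {A : Type*} [CommRing A] {n : ℕ} (aa : Fin n → A) (q : ℕ)
    (f : KoszulDeg A n (q + 1)) : KoszulDeg A n q :=
  fun s => ∑ i ∈ (s.val)ᶜ.attach,
    (-1 : A) ^ (s.val.filter (fun k => k < i.val)).card * aa i.val *
      f ⟨insert i.val s.val, by
        rw [Finset.card_insert_of_notMem (Finset.mem_compl.mp i.property), s.property]⟩

/-- The transition map `μ_{j,i}` of the inverse system of Koszul complexes, in degree
`-q`, for exponents `j ≥ i` with `e = j - i`: multiplication by `∏_{k ∈ s} a_k^e` on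
the component indexed by the subset `s`. -/
noncomputable def koszulTransition {A : Type*} [CommRing A] {n : ℕ} (aa : Fin n → A)
    (e q : ℕ) (f : KoszulDeg A n q) : KoszulDeg A n q :=
  fun s => (∏ k ∈ s.val, aa k ^ e) * f s

/-- A finite sequence `aa` in a commutative ring `A` is weakly proregular if for every
`q < 0` the inverse system of Koszul cohomologies `{H^q(K(A; aa^i))}_{i ∈ ℕ}` is
pro-zero: for each `i` there is `j ≥ i` such that every cocycle of `K(A; aa^j)` in
degree `q` becomes a coboundary in `K(A; aa^i)` after applying `μ_{j,i}`. -/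
def IsWeaklyProregular {A : Type*} [CommRing A] {n : ℕ} (aa : Fin n → A) : Prop :=
  ∀ q i : ℕ, ∃ j : ℕ, i ≤ j ∧ ∀ f : KoszulDeg A n (q + 1),
    koszulD (fun k => aa k ^ j) q f = 0 →
    ∃ g : KoszulDeg A n (q + 2),
      koszulD (fun k => aa k ^ i) (q + 1) g = koszulTransition aa (j - i) (q + 1) f

/-- An ideal is weakly proregular if it is generated by a weakly proregular finite
sequence. -/
def Ideal.IsWeaklyProregular {A : Type*} [CommRing A] (I : Ideal A) : Prop :=
  ∃ (n : ℕ) (aa : Fin n → A), Ideal.span (Set.range aa) = I ∧ _root_.IsWeaklyProregular aa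


section Aux

open TensorProduct LinearMap

variable {A : Type*} [CommRing A] {n : ℕ}

/-- `koszulD` as a linear map. -/
noncomputable def koszulDL (aa : Fin n → A) (q : ℕ) :
    KoszulDeg A n (q + 1) →ₗ[A] KoszulDeg A n q where
  toFun := koszulD aa q
  map_add' f g := by
    funext s
    simp [koszulD, Pi.add_apply, mul_add, Finset.sum_add_distrib]
  map_smul' c f := by
    funext s
    simp only [koszulD, Pi.smul_apply, smul_eq_mul, RingHom.id_apply, Finset.mul_sum]
    exact Finset.sum_congr rfl fun i _ => by ring

@[simp] lemma koszulDL_apply (aa : Fin n → A) (q : ℕ) (f : KoszulDeg A n (q + 1)) :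
    koszulDL aa q f = koszulD aa q f := rfl

/-- `koszulTransition` as a linear map. -/
noncomputable def koszulTL (aa : Fin n → A) (e q : ℕ) :
    KoszulDeg A n q →ₗ[A] KoszulDeg A n q where
  toFun := koszulTransition aa e q
  map_add' f g := by
    funext s
    simp [koszulTransition, Pi.add_apply, mul_add]
  map_smul' c f := by
    funext s
    simp only [koszulTransition, Pi.smul_apply, smul_eq_mul, RingHom.id_apply]
    ring

@[simp] lemma koszulTL_apply (aa : Fin n → A) (e q : ℕ) (f : KoszulDeg A n q) :
    koszulTL aa e q f = koszulTransition aa e q f := rfl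

variable (A) in
/-- Base change identification for the Koszul components. -/
noncomputable def koszulBC (B : Type*) [CommRing B] [Algebra A B] (n q : ℕ) :
    B ⊗[A] KoszulDeg A n q ≃ₗ[B] KoszulDeg B n q :=
  TensorProduct.piScalarRight A B B _

variable {B : Type*} [CommRing B] [Algebra A B]

lemma koszulBC_tmul (q : ℕ) (b : B) (w : KoszulDeg A n q) :
    koszulBC A B n q (b ⊗ₜ w) = fun s => algebraMap A B (w s) * b := by
  funext s
  simp [koszulBC, Algebra.smul_def]

lemma koszulBC_baseChange_D (a : Fin n → A) (q : ℕ) :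
    (koszulBC A B n q).toLinearMap ∘ₗ (koszulDL a q).baseChange B
      = (koszulDL (fun k => algebraMap A B (a k)) q) ∘ₗ (koszulBC A B n (q + 1)).toLinearMap := by
  apply TensorProduct.AlgebraTensorModule.ext
  intro b w
  simp only [LinearMap.comp_apply, LinearEquiv.coe_coe, baseChange_tmul]
  rw [koszulBC_tmul, koszulBC_tmul]
  funext s
  simp only [koszulDL_apply, koszulD, map_sum, Finset.sum_mul]
  refine Finset.sum_congr rfl fun i _ => ?_
  simp only [map_mul, map_pow, map_neg, map_one]
  ring

lemma koszulBC_baseChange_D_apply (a : Fin n → A) (q : ℕ) (t : B ⊗[A] KoszulDeg A n (q + 1)) :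
    koszulBC A B n q ((koszulDL a q).baseChange B t)
      = koszulD (fun k => algebraMap A B (a k)) q (koszulBC A B n (q + 1) t) := by
  have := LinearMap.congr_fun (koszulBC_baseChange_D (B := B) a q) t
  simpa using this

lemma koszulBC_baseChange_T (a : Fin n → A) (e q : ℕ) :
    (koszulBC A B n q).toLinearMap ∘ₗ (koszulTL a e q).baseChange B
      = (koszulTL (fun k => algebraMap A B (a k)) e q) ∘ₗ (koszulBC A B n q).toLinearMap := by
  apply TensorProduct.AlgebraTensorModule.ext
  intro b w
  simp only [LinearMap.comp_apply, LinearEquiv.coe_coe, baseChange_tmul]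
  rw [koszulBC_tmul, koszulBC_tmul]
  funext s
  simp only [koszulTL_apply, koszulTransition, map_mul, map_prod, map_pow]
  ring

lemma koszulBC_baseChange_T_apply (a : Fin n → A) (e q : ℕ) (t : B ⊗[A] KoszulDeg A n q) :
    koszulBC A B n q ((koszulTL a e q).baseChange B t)
      = koszulTransition (fun k => algebraMap A B (a k)) e q (koszulBC A B n q t) := by
  have := LinearMap.congr_fun (koszulBC_baseChange_T (B := B) a e q) t
  simpa using this

end Aux

open TensorProduct LinearMap

/-- If `A → B` is a flat ring homomorphism and `(a_1, ..., a_n)` is a weakly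
proregular sequence in `A`, then the image sequence in `B` is weakly proregular. -/
theorem isWeaklyProregular_map_of_flat {A B : Type*} [CommRing A] [CommRing B]
    [Algebra A B] [Module.Flat A B] {n : ℕ} (aa : Fin n → A)
    (h : IsWeaklyProregular aa) :
    IsWeaklyProregular (fun k => algebraMap A B (aa k)) := by
  classical
  intro q i
  obtain ⟨j, hij, hA⟩ := h q i
  refine ⟨j, hij, ?_⟩
  intro f hf
  -- A-side linear maps
  set dj : KoszulDeg A n (q + 1) →ₗ[A] KoszulDeg A n q :=
    koszulDL (fun k => aa k ^ j) q with hdj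
  set d1 : KoszulDeg A n (q + 2) →ₗ[A] KoszulDeg A n (q + 1) :=
    koszulDL (fun k => aa k ^ i) (q + 1) with hd1
  set μ : KoszulDeg A n (q + 1) →ₗ[A] KoszulDeg A n (q + 1) :=
    koszulTL aa (j - i) (q + 1) with hμ
  set Z := LinearMap.ker dj with hZ
  set φ : (Z × KoszulDeg A n (q + 2)) →ₗ[A] KoszulDeg A n (q + 1) :=
    (μ ∘ₗ Z.subtype) ∘ₗ LinearMap.fst A _ _ - d1 ∘ₗ LinearMap.snd A _ _ with hφ
  set P := LinearMap.ker φ with hP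
  set prZ : P →ₗ[A] Z := (LinearMap.fst A _ _) ∘ₗ P.subtype with hprZ
  set prV : P →ₗ[A] KoszulDeg A n (q + 2) := (LinearMap.snd A _ _) ∘ₗ P.subtype with hprV
  have hsurj : Function.Surjective prZ := by
    intro z
    obtain ⟨g, hg⟩ := hA z.1 (LinearMap.mem_ker.mp z.2)
    refine ⟨⟨(z, g), ?_⟩, rfl⟩
    simp only [hP, LinearMap.mem_ker, hφ, LinearMap.sub_apply, LinearMap.comp_apply,
      LinearMap.fst_apply, LinearMap.snd_apply, Submodule.coe_subtype]
    rw [sub_eq_zero]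
    simp only [hμ, hd1, koszulTL_apply, koszulDL_apply]
    exact hg.symm
  have hkey : d1 ∘ₗ prV = (μ ∘ₗ Z.subtype) ∘ₗ prZ := by
    refine LinearMap.ext fun p => ?_
    have hp := p.2
    simp only [hP, LinearMap.mem_ker, hφ, LinearMap.sub_apply, LinearMap.comp_apply,
      LinearMap.fst_apply, LinearMap.snd_apply, Submodule.coe_subtype, sub_eq_zero] at hp
    simpa [hprV, hprZ] using hp.symm
  -- pass to B
  set E := koszulBC A B n with hE
  set t : B ⊗[A] KoszulDeg A n (q + 1) := (E (q + 1)).symm f with ht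
  have hft : E (q + 1) t = f := (E (q + 1)).apply_symm_apply f
  have hpowj : (fun k => algebraMap A B (aa k ^ j)) = fun k => algebraMap A B (aa k) ^ j := by
    funext k; exact map_pow _ _ _
  have hpowi : (fun k => algebraMap A B (aa k ^ i)) = fun k => algebraMap A B (aa k) ^ i := by
    funext k; exact map_pow _ _ _
  have htz : dj.baseChange B t = 0 := by
    have h1 : E q (dj.baseChange B t) = 0 := by
      rw [hE, hdj, koszulBC_baseChange_D_apply, hpowj]
      rw [← hE, hft]
      exact hf
    exact ((E q).map_eq_zero_iff).mp h1
  have hexA : Function.Exact (Submodule.subtype Z) dj := LinearMap.exact_subtype_ker_map dj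
  have hexB : Function.Exact ((Submodule.subtype Z).baseChange B) (dj.baseChange B) := by
    have := Module.Flat.lTensor_exact (R := A) B hexA
    rwa [← LinearMap.baseChange_eq_ltensor, ← LinearMap.baseChange_eq_ltensor] at this
  obtain ⟨z, hz⟩ := (hexB t).mp htz
  have hsurjB : Function.Surjective (prZ.baseChange B) := by
    rw [show (prZ.baseChange B : B ⊗[A] P → B ⊗[A] Z) = prZ.lTensor B from
      LinearMap.baseChange_eq_ltensor prZ]
    exact LinearMap.lTensor_surjective B hsurj
  obtain ⟨p, hp⟩ := hsurjB z
  refine ⟨E (q + 2) (prV.baseChange B p), ?_⟩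
  have step1 : koszulD (fun k => algebraMap A B (aa k) ^ i) (q + 1)
      (E (q + 2) (prV.baseChange B p)) = E (q + 1) (d1.baseChange B (prV.baseChange B p)) := by
    rw [hE, hd1, koszulBC_baseChange_D_apply, hpowi]
  rw [step1]
  have step2 : d1.baseChange B (prV.baseChange B p)
      = μ.baseChange B ((Submodule.subtype Z).baseChange B (prZ.baseChange B p)) := by
    rw [← LinearMap.comp_apply, ← LinearMap.baseChange_comp, hkey,
      LinearMap.baseChange_comp, LinearMap.baseChange_comp]
    rfl
  rw [step2, hp, hz]
  rw [hE, hμ, koszulBC_baseChange_T_apply, ← hE, hft]
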